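/- arXiv:1406.5414 — 2 statements merged into one kernel-verified Lean document; each statement's English description precedes it below -/
import Mathlib

section
/- Fix $p \in [1, \infty]$ and let $q$ be the conjugate exponent. Let $C \subseteq L^p(\Omega, \mathcal{F}, P)$ be a convex cone with $C \supseteq -L^p_{\ge 0}$, $C \cap L^p_{\ge 0} = \{0\}$, and $C$ closed in the topology $\sigma(L^p, L^q)$. Then there exists a probability measure $Q$ equivalent to $P$ with density $dQ/dP \in L^q(P)$ such that $E_Q[Y] \le 0$ for all $Y \in C$. -/
open MeasureTheory Filter Set
open scoped ENNReal Topology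

noncomputable section
open Classical

variable {Ω : Type*}

/-- A simple predictable strategy `H = ∑_{i=0}^n K_i 1_{(τ_i, τ_{i+1}]}` with stopping times
`0 = τ_0 ≤ … ≤ τ_{n+1} = 1` and `K_i` being `𝓕_{τ_i}`-measurable. -/
structure SimpleStrategy {m : MeasurableSpace Ω} (𝓕 : Filtration ℝ m) where
  n : ℕ
  τ : ℕ → Ω → ℝ
  K : ℕ → Ω → ℝ
  isStopping : ∀ i, IsStoppingTime 𝓕 (fun ω => (τ i ω : WithTop ℝ))
  mono : ∀ ω, Monotone fun i => τ i ω
  zero : ∀ ω, τ 0 ω = 0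
  last : ∀ ω, τ (n + 1) ω = 1
  meas : ∀ i, Measurable[(isStopping i).measurableSpace] (K i)

namespace SimpleStrategy

variable {m : MeasurableSpace Ω} {𝓕 : Filtration ℝ m}

/-- The strategy is bounded by `1`. -/
def Bounded1 (H : SimpleStrategy 𝓕) : Prop := ∀ i ω, |H.K i ω| ≤ 1

/-- The (elementary) stochastic integral `(H ∙ X)_t`. -/
def integral (H : SimpleStrategy 𝓕) (X : ℝ → Ω → ℝ) (t : ℝ) (ω : Ω) : ℝ :=
  ∑ i ∈ Finset.range (H.n + 1),
    H.K i ω * (X (min (H.τ (i + 1) ω) t) ω - X (min (H.τ i ω) t) ω)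

end SimpleStrategy

/-- Running supremum of `|X|` over the time interval `[0,1]`. -/
def runSup (X : ℝ → Ω → ℝ) (ω : Ω) : ℝ :=
  sSup ((fun t => |X t ω|) '' Icc (0 : ℝ) 1)

/-- A sequence of random variables is bounded in `L⁰` (bounded in probability). -/
def L0BoundedSeq {m : MeasurableSpace Ω} (μ : Measure Ω) (ξ : ℕ → Ω → ℝ) : Prop :=
  Tendsto (fun a : ℝ => ⨆ n, μ {ω | a ≤ |ξ n ω|}) atTop (𝓝 (0 : ℝ≥0∞))

/-- Predictable uniform tightness (P-UT) of a sequence of processes on `[0,1]`. -/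
def PUT {m : MeasurableSpace Ω} (𝓕 : Filtration ℝ m) (μ : Measure Ω)
    (X : ℕ → ℝ → Ω → ℝ) : Prop :=
  ∀ t ∈ Icc (0 : ℝ) 1,
    Tendsto (fun a : ℝ =>
        ⨆ (n : ℕ) (H : SimpleStrategy 𝓕) (_ : H.Bounded1),
          μ {ω | a ≤ |H.integral (X n) t ω|}) atTop (𝓝 (0 : ℝ≥0∞))

/-- A process is càdlàg (right-continuous with left limits) in time, for every `ω`. -/
def IsCadlag (X : ℝ → Ω → ℝ) : Prop :=
  ∀ ω, (∀ t, ContinuousWithinAt (fun s => X s ω) (Ici t) t) ∧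
    ∀ t, ∃ l, Tendsto (fun s => X s ω) (𝓝[<] t) (𝓝 l)

/-- The jump `ΔX_t = X_t - X_{t-}` of a process. -/
def jump (X : ℝ → Ω → ℝ) (t : ℝ) (ω : Ω) : ℝ :=
  X t ω - Function.leftLim (fun s => X s ω) t

/-- Uniform convergence in probability on `[0,1]` (ucp). -/
def TendstoUCP {m : MeasurableSpace Ω} (μ : Measure Ω) (X : ℕ → ℝ → Ω → ℝ)
    (Y : ℝ → Ω → ℝ) : Prop :=
  ∀ ε : ℝ, 0 < ε →
    Tendsto (fun n => μ {ω | ε ≤ runSup (fun t ω' => X n t ω' - Y t ω') ω}) atTop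
      (𝓝 (0 : ℝ≥0∞))

/-- A finite partition `0 = t_0 < t_1 < … < t_r = 1` of `[0,1]`. -/
structure Partition01 where
  r : ℕ
  t : ℕ → ℝ
  pos : 0 < r
  zero : t 0 = 0
  last : t r = 1
  mono : ∀ i < r, t i < t (i + 1)

/-- The mesh of a partition. -/
def Partition01.mesh (P : Partition01) : ℝ :=
  ⨆ i : Fin P.r, (P.t (i.1 + 1) - P.t i.1)

/-- Riemann-type sum for the quadratic covariation along a partition, up to time `t`. -/
def qcovSum (P : Partition01) (X Y : ℝ → Ω → ℝ) (t : ℝ) (ω : Ω) : ℝ :=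
  ∑ i ∈ Finset.range P.r,
    (X (min (P.t (i + 1)) t) ω - X (min (P.t i) t) ω) *
      (Y (min (P.t (i + 1)) t) ω - Y (min (P.t i) t) ω)

/-- `Q` is the quadratic covariation process `[X,Y]` : along every sequence of partitions with
vanishing mesh the Riemann sums converge in probability. -/
def IsQCovProcess {m : MeasurableSpace Ω} (μ : Measure Ω) (X Y Q : ℝ → Ω → ℝ) : Prop :=
  ∀ P : ℕ → Partition01, Tendsto (fun k => (P k).mesh) atTop (𝓝 (0 : ℝ)) →
    ∀ t ∈ Icc (0 : ℝ) 1,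
      TendstoInMeasure μ (fun k ω => qcovSum (P k) X Y t ω) atTop (Q t)

/-- Riemann-type sum with left endpoints for the stochastic integral `H_- ∙ X`. -/
def leftRiemannSum (P : Partition01) (H X : ℝ → Ω → ℝ) (t : ℝ) (ω : Ω) : ℝ :=
  ∑ i ∈ Finset.range P.r,
    H (P.t i) ω * (X (min (P.t (i + 1)) t) ω - X (min (P.t i) t) ω)

/-- `I` is the stochastic integral process `H_- ∙ X`, characterized as the limit in
probability of left-endpoint Riemann sums along partitions with vanishing mesh. -/
def IsLeftIntegral {m : MeasurableSpace Ω} (μ : Measure Ω) (H X I : ℝ → Ω → ℝ) : Prop :=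
  ∀ P : ℕ → Partition01, Tendsto (fun k => (P k).mesh) atTop (𝓝 (0 : ℝ)) →
    ∀ t ∈ Icc (0 : ℝ) 1,
      TendstoInMeasure μ (fun k ω => leftRiemannSum (P k) H X t ω) atTop (I t)

/-- The process `X` stopped at the random time `τ`. -/
def stoppedAt (X : ℝ → Ω → ℝ) (τ : Ω → ℝ) : ℝ → Ω → ℝ := fun t ω => X (min t (τ ω)) ω

/-- A local martingale on `[0,1]`. -/
def IsLocalMartingale {m : MeasurableSpace Ω} (𝓕 : Filtration ℝ m) (μ : Measure Ω)
    (N : ℝ → Ω → ℝ) : Prop :=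
  ∃ τ : ℕ → Ω → ℝ, (∀ k, IsStoppingTime 𝓕 (fun ω => (τ k ω : WithTop ℝ))) ∧ (∀ ω, Monotone fun k => τ k ω) ∧
    (∀ ω, ∃ k, 1 ≤ τ k ω) ∧ ∀ k, Martingale (stoppedAt N (τ k)) 𝓕 μ

/-- The predictable σ-algebra on `ℝ × Ω`, generated by the stochastic intervals
`(a,b] × A`, `A ∈ 𝓕_a`, and `{0} × A`, `A ∈ 𝓕_0`. -/
def predictableSigma {m : MeasurableSpace Ω} (𝓕 : Filtration ℝ m) :
    MeasurableSpace (ℝ × Ω) :=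
  MeasurableSpace.generateFrom
    ({s | ∃ (a b : ℝ) (A : Set Ω), MeasurableSet[𝓕 a] A ∧ s = Ioc a b ×ˢ A} ∪
      {s | ∃ A : Set Ω, MeasurableSet[𝓕 0] A ∧ s = ({0} : Set ℝ) ×ˢ A})

/-- A predictable process. -/
def Predictable {m : MeasurableSpace Ω} (𝓕 : Filtration ℝ m) (H : ℝ → Ω → ℝ) : Prop :=
  @Measurable _ _ (predictableSigma 𝓕) _ fun p : ℝ × Ω => H p.1 p.2

/-- The Emery (semimartingale) distance on processes on `[0,1]`. -/
def emeryDist {m : MeasurableSpace Ω} (𝓕 : Filtration ℝ m) (μ : Measure Ω)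
    (X Y : ℝ → Ω → ℝ) : ℝ :=
  ⨆ H : {H : SimpleStrategy 𝓕 // H.Bounded1},
    ∫ ω, min (runSup (fun t ω' =>
      H.1.integral (fun s ω'' => X s ω'' - Y s ω'') t ω') ω) 1 ∂μ

/-- A set of processes is (sequentially) closed in the Emery topology. -/
def EmeryClosed {m : MeasurableSpace Ω} (𝓕 : Filtration ℝ m) (μ : Measure Ω)
    (𝒳 : Set (ℝ → Ω → ℝ)) : Prop :=
  ∀ (X : ℕ → ℝ → Ω → ℝ) (Y : ℝ → Ω → ℝ), (∀ n, X n ∈ 𝒳) →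
    Tendsto (fun n => emeryDist 𝓕 μ (X n) Y) atTop (𝓝 (0 : ℝ)) → Y ∈ 𝒳

/-- An abstract stochastic integral operator `(H, X) ↦ H ∙ X`, assumed to be additive,
to agree with the elementary integral on elementary predictable strategies, to be monotone
against integrators of monotone paths (Stieltjes case) and to satisfy associativity. -/
structure StochInt {m : MeasurableSpace Ω} (𝓕 : Filtration ℝ m) where
  int : (ℝ → Ω → ℝ) → (ℝ → Ω → ℝ) → ℝ → Ω → ℝ
  add_strat : ∀ H G X t ω,
    int (fun s ω' => H s ω' + G s ω') X t ω = int H X t ω + int G X t ω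
  add_integrator : ∀ H X Y t ω,
    int H (fun s ω' => X s ω' + Y s ω') t ω = int H X t ω + int H Y t ω
  elem : ∀ (u v : ℝ) (K : Ω → ℝ), Measurable[𝓕 u] K → ∀ X t ω,
    int (fun s ω' => K ω' * (Ioc u v).indicator (fun _ => (1 : ℝ)) s) X t ω
      = K ω * (X (min v t) ω - X (min u t) ω)
  mono_fv : ∀ H G X, (∀ s ω, H s ω ≤ G s ω) → (∀ ω, Monotone fun s => X s ω) →
    ∀ t ω, int H X t ω ≤ int G X t ω
  assoc : ∀ H G X t ω, int H (int G X) t ω = int (fun s ω' => H s ω' * G s ω') X t ω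

/-- Kabanov's concatenation property of a set of (1-admissible) wealth processes. -/
def ConcatProperty {m : MeasurableSpace Ω} (𝓕 : Filtration ℝ m) (I : StochInt 𝓕)
    (𝒳 : Set (ℝ → Ω → ℝ)) : Prop :=
  ∀ H G : ℝ → Ω → ℝ, Predictable 𝓕 H → Predictable 𝓕 G →
    (∃ c, ∀ s ω, |H s ω| ≤ c) → (∃ c, ∀ s ω, |G s ω| ≤ c) →
    (∀ s ω, 0 ≤ H s ω) → (∀ s ω, 0 ≤ G s ω) → (∀ s ω, H s ω * G s ω = 0) →
    ∀ X ∈ 𝒳, ∀ Y ∈ 𝒳,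
      (∀ t ∈ Icc (0 : ℝ) 1, ∀ ω, -1 ≤ I.int H X t ω + I.int G Y t ω) →
      (fun t ω => I.int H X t ω + I.int G Y t ω) ∈ 𝒳

/-- The abstract setting of Kabanov: `𝒳₁` is a convex set of semimartingales starting at `0`,
bounded from below by `-1`, closed in the Emery topology, with the concatenation property. -/
def KabanovSetting {m : MeasurableSpace Ω} (𝓕 : Filtration ℝ m) (μ : Measure Ω)
    (I : StochInt 𝓕) (𝒳 : Set (ℝ → Ω → ℝ)) : Prop :=
  Convex ℝ 𝒳 ∧ (∀ X ∈ 𝒳, ∀ ω, X 0 ω = 0) ∧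
    (∀ X ∈ 𝒳, ∀ t ∈ Icc (0 : ℝ) 1, ∀ ω, -1 ≤ X t ω) ∧
    EmeryClosed 𝓕 μ 𝒳 ∧ ConcatProperty 𝓕 I 𝒳

namespace KY

variable {m : MeasurableSpace Ω} {μ : Measure Ω} {p q : ℝ≥0∞}

lemma div_eq (hpq : p⁻¹ + q⁻¹ = 1) : (1 : ℝ≥0∞) / 1 = 1 / q + 1 / p := by
  rw [one_div, one_div, one_div, inv_one, add_comm q⁻¹ p⁻¹, hpq]

lemma integrable_mul (hpq : p⁻¹ + q⁻¹ = 1) (f : Lp ℝ p μ) (g : Lp ℝ q μ) :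
    Integrable (fun ω => f ω * g ω) μ := by
  have h : MemLp (⇑g • ⇑f) 1 μ := (Lp.memLp f).smul (Lp.memLp g) (hpqr := ⟨by rw [inv_one, add_comm]; exact hpq⟩)
  exact (memLp_one_iff_integrable.mp h).congr
    (Eventually.of_forall fun ω => by simp [mul_comm])

variable (μ p q) in
noncomputable def pairing (hpq : p⁻¹ + q⁻¹ = 1) : Lp ℝ p μ →ₗ[ℝ] Lp ℝ q μ →ₗ[ℝ] ℝ :=
  LinearMap.mk₂ ℝ (fun f g => ∫ ω, f ω * g ω ∂μ)
    (fun f₁ f₂ g => by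
      rw [← integral_add (integrable_mul hpq f₁ g) (integrable_mul hpq f₂ g)]
      refine integral_congr_ae ?_
      filter_upwards [Lp.coeFn_add f₁ f₂] with ω hω
      rw [hω]; simp [add_mul])
    (fun c f g => by
      rw [← integral_smul]
      refine integral_congr_ae ?_
      filter_upwards [Lp.coeFn_smul c f] with ω hω
      rw [hω]; simp [mul_assoc])
    (fun f g₁ g₂ => by
      rw [← integral_add (integrable_mul hpq f g₁) (integrable_mul hpq f g₂)]
      refine integral_congr_ae ?_
      filter_upwards [Lp.coeFn_add g₁ g₂] with ω hω
      rw [hω]; simp [mul_add])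
    (fun c f g => by
      rw [← integral_smul]
      refine integral_congr_ae ?_
      filter_upwards [Lp.coeFn_smul c g] with ω hω
      rw [hω]; simp [smul_eq_mul]; ring)

lemma pairing_apply (hpq : p⁻¹ + q⁻¹ = 1) (f : Lp ℝ p μ) (g : Lp ℝ q μ) :
    pairing μ p q hpq f g = ∫ ω, f ω * g ω ∂μ := rfl

lemma top_eq (hpq : p⁻¹ + q⁻¹ = 1) :
    (WeakBilin.instTopologicalSpace (pairing μ p q hpq)) =
      ⨅ g : Lp ℝ q μ,
        TopologicalSpace.induced (fun f : Lp ℝ p μ => ∫ ω, f ω * g ω ∂μ) inferInstance := by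
  show TopologicalSpace.induced (fun (x : WeakBilin (pairing μ p q hpq)) (y : Lp ℝ q μ) =>
      pairing μ p q hpq x y)
      (⨅ g : Lp ℝ q μ, TopologicalSpace.induced (fun h : Lp ℝ q μ → ℝ => h g) inferInstance) = _
  rw [induced_iInf]
  simp only [induced_compose]
  rfl

lemma pair_bound (hpq : p⁻¹ + q⁻¹ = 1) (f : Lp ℝ p μ) (g : Lp ℝ q μ) :
    |∫ ω, f ω * g ω ∂μ| ≤ ‖f‖ * ‖g‖ := by
  have h1 : eLpNorm (⇑g • ⇑f) 1 μ ≤ eLpNorm (⇑g) q μ * eLpNorm (⇑f) p μ :=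
    eLpNorm_smul_le_mul_eLpNorm (Lp.aestronglyMeasurable f) (Lp.aestronglyMeasurable g)
      (hpqr := ⟨by rw [inv_one, add_comm]; exact hpq⟩)
  have h2 : eLpNorm (⇑f * ⇑g) 1 μ = eLpNorm (⇑g • ⇑f) 1 μ :=
    eLpNorm_congr_ae (Eventually.of_forall fun ω => by simp [mul_comm])
  have h3 : |∫ ω, f ω * g ω ∂μ| ≤ ∫ ω, ‖(⇑f * ⇑g) ω‖ ∂μ := by
    simpa using norm_integral_le_integral_norm (μ := μ) (⇑f * ⇑g)
  have h4 : ∫ ω, ‖(⇑f * ⇑g) ω‖ ∂μ = (eLpNorm (⇑f * ⇑g) 1 μ).toReal := by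
    rw [integral_norm_eq_lintegral_enorm
      ((Lp.aestronglyMeasurable f).mul (Lp.aestronglyMeasurable g)),
      eLpNorm_one_eq_lintegral_enorm]
  have hne : eLpNorm (⇑g) q μ * eLpNorm (⇑f) p μ ≠ ∞ :=
    ENNReal.mul_ne_top (Lp.eLpNorm_ne_top g) (Lp.eLpNorm_ne_top f)
  calc |∫ ω, f ω * g ω ∂μ| ≤ (eLpNorm (⇑f * ⇑g) 1 μ).toReal := by
        rw [← h4]; exact h3
    _ ≤ (eLpNorm (⇑g) q μ * eLpNorm (⇑f) p μ).toReal := by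
        refine ENNReal.toReal_mono hne ?_
        rw [h2]; exact h1
    _ = ‖f‖ * ‖g‖ := by
        rw [ENNReal.toReal_mul, Lp.norm_def, Lp.norm_def, mul_comm]

lemma coeFn_sum_range [Fact (1 ≤ q)] (F : ℕ → Lp ℝ q μ) (N : ℕ) :
    ⇑(∑ i ∈ Finset.range N, F i) =ᵐ[μ] fun ω => ∑ i ∈ Finset.range N, F i ω := by
  induction N with
  | zero => simp only [Finset.range_zero, Finset.sum_empty]; exact Lp.coeFn_zero ℝ q μ
  | succ N ih =>
    have h := Lp.coeFn_add (∑ i ∈ Finset.range N, F i) (F N)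
    rw [Finset.sum_range_succ]
    filter_upwards [h, ih] with ω h1 h2
    simp only [Finset.sum_range_succ, Pi.add_apply] at *
    rw [h1, h2]


lemma exists_repr {E F : Type*} [AddCommGroup E] [Module ℝ E] [AddCommGroup F] [Module ℝ F]
    (B : E →ₗ[ℝ] F →ₗ[ℝ] ℝ) (φ : WeakBilin B →L[ℝ] ℝ) : ∃ g : F, ∀ x : E, φ x = B x g := by
  have hcont : Continuous ((normSeminorm ℝ ℝ).comp (φ : WeakBilin B →ₗ[ℝ] ℝ)) := by
    show Continuous fun x : WeakBilin B => ‖φ x‖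
    exact continuous_norm.comp φ.continuous
  obtain ⟨s, C0, hC0, hle⟩ := Seminorm.bound_of_continuous
    (LinearMap.weakBilin_withSeminorms B) _ hcont
  have hker : (⨅ g : s, LinearMap.ker ((B.flip (g : F) : E →ₗ[ℝ] ℝ))) ≤
      LinearMap.ker (φ : WeakBilin B →ₗ[ℝ] ℝ) := by
    intro x hx
    rw [Submodule.mem_iInf] at hx
    have hsup : (s.sup B.toSeminormFamily) x = 0 := by
      refine le_antisymm ?_ (apply_nonneg _ _)
      refine Seminorm.finset_sup_apply_le le_rfl fun g hg => ?_
      rw [LinearMap.toSeminormFamily_apply]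
      have := hx ⟨g, hg⟩
      rw [LinearMap.mem_ker] at this
      have hBg : B x g = 0 := this
      simp [hBg]
    change φ x = 0
    have h0 : ‖φ x‖ ≤ 0 := by
      calc ‖φ x‖ = ((normSeminorm ℝ ℝ).comp (φ : WeakBilin B →ₗ[ℝ] ℝ)) x := rfl
        _ ≤ (C0 • s.sup B.toSeminormFamily) x := hle x
        _ = C0 • ((s.sup B.toSeminormFamily) x) := rfl
        _ = 0 := by rw [hsup]; simp
    simpa using le_antisymm h0 (norm_nonneg _)
  have hmem : (φ : WeakBilin B →ₗ[ℝ] ℝ) ∈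
      Submodule.span ℝ (Set.range fun g : s => (B.flip (g : F) : E →ₗ[ℝ] ℝ)) :=
    mem_span_of_iInf_ker_le_ker hker
  have hsub : Submodule.span ℝ (Set.range fun g : s => (B.flip (g : F) : E →ₗ[ℝ] ℝ)) ≤
      LinearMap.range B.flip := by
    rw [Submodule.span_le]
    rintro _ ⟨g, rfl⟩
    exact ⟨g, rfl⟩
  obtain ⟨g, hg⟩ := hsub hmem
  exact ⟨g, fun x => (LinearMap.congr_fun hg x).symm⟩


end KY

/-- **The Kreps–Yan theorem.** Let `1 ≤ p ≤ ∞` with conjugate exponent `q`, and let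
`C ⊆ Lᵖ` be a convex cone containing `-Lᵖ_{≥0}`, with `C ∩ Lᵖ_{≥0} = {0}`, closed in the
weak topology `σ(Lᵖ, L^q)`. Then there is a probability density `Z ∈ L^q`, `Z > 0` a.s.,
`E[Z] = 1`, separating `C`: `E[Z·Y] ≤ 0` for all `Y ∈ C`. -/
theorem kreps_yan
    {m : MeasurableSpace Ω} (μ : Measure Ω) [IsProbabilityMeasure μ]
    (p q : ℝ≥0∞) (hp : 1 ≤ p) (hpq : p⁻¹ + q⁻¹ = 1)
    (C : Set (Lp ℝ p μ))
    (hconv : Convex ℝ C)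
    (hcone : ∀ c : ℝ, 0 ≤ c → ∀ f ∈ C, c • f ∈ C)
    (hneg : ∀ f : Lp ℝ p μ, (∀ᵐ ω ∂μ, 0 ≤ f ω) → -f ∈ C)
    (hpos : ∀ f ∈ C, (∀ᵐ ω ∂μ, 0 ≤ f ω) → f = 0)
    (hclosed : @IsClosed _ (⨅ g : Lp ℝ q μ,
        TopologicalSpace.induced (fun f : Lp ℝ p μ => ∫ ω, f ω * g ω ∂μ) inferInstance) C) :
    ∃ Z : Ω → ℝ, (∀ᵐ ω ∂μ, 0 < Z ω) ∧ MemLp Z q μ ∧ (∫ ω, Z ω ∂μ = 1) ∧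
      ∀ f ∈ C, ∫ ω, Z ω * f ω ∂μ ≤ 0 := by
  have hq : 1 ≤ q := by
    rw [← ENNReal.inv_le_one]
    exact le_of_le_of_eq le_add_self hpq
  haveI : Fact (1 ≤ p) := ⟨hp⟩
  haveI : Fact (1 ≤ q) := ⟨hq⟩
  set B := KY.pairing μ p q hpq with hB
  have hclosed' : @IsClosed (WeakBilin B) (WeakBilin.instTopologicalSpace B) C := by
    rw [hB, KY.top_eq hpq]
    exact hclosed
  have h0C : (0 : Lp ℝ p μ) ∈ C := by
    have h := hneg 0 (by filter_upwards [Lp.coeFn_zero ℝ p μ] with ω hω; simp [hω])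
    simpa using h
  set G : Set (Lp ℝ q μ) :=
    {g | (0 ≤ᵐ[μ] ⇑g) ∧ ∀ f ∈ C, ∫ ω, f ω * g ω ∂μ ≤ 0} with hG
  -- Separation step
  have hsep : ∀ A : Set Ω, MeasurableSet A → 0 < μ A →
      ∃ g ∈ G, 0 < ∫ ω, A.indicator (fun _ => (1 : ℝ)) ω * g ω ∂μ := by
    intro A hA hApos
    have hxmem : MemLp (A.indicator fun _ => (1 : ℝ)) p μ :=
      memLp_indicator_const p hA (1 : ℝ) (Or.inr (measure_ne_top μ A))
    set x : Lp ℝ p μ := hxmem.toLp _ with hx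
    have hx_coe : ⇑x =ᵐ[μ] A.indicator fun _ => (1 : ℝ) := MemLp.coeFn_toLp hxmem
    have hx_nonneg : ∀ᵐ ω ∂μ, 0 ≤ x ω := by
      filter_upwards [hx_coe] with ω hω
      rw [hω]
      exact Set.indicator_nonneg (fun _ _ => zero_le_one) ω
    have hx_ne : x ∉ C := by
      intro hmem
      have hx0 : x = 0 := hpos x hmem hx_nonneg
      have h0 : (A.indicator fun _ => (1 : ℝ)) =ᵐ[μ] 0 := by
        refine hx_coe.symm.trans ?_
        rw [hx0]
        exact Lp.coeFn_zero ℝ p μ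
      have hAsub : A ⊆ {ω | ¬ (A.indicator (fun _ => (1 : ℝ)) ω = 0)} := by
        intro ω hω
        simp only [Set.mem_setOf_eq, Set.indicator_of_mem hω]
        exact one_ne_zero
      have hnull : μ {ω | ¬ (A.indicator (fun _ => (1 : ℝ)) ω = 0)} = 0 := by
        have h0' := h0
        rw [EventuallyEq, ae_iff] at h0'
        simpa using h0'
      exact absurd (measure_mono_null hAsub hnull) hApos.ne'
    obtain ⟨φ, u, hφC, hφx⟩ :=
      geometric_hahn_banach_closed_point (E := WeakBilin B) hconv hclosed' hx_ne
    have hu0 : 0 < u := by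
      have := hφC 0 h0C
      simpa using this
    have hφ_nonpos : ∀ f ∈ C, φ f ≤ 0 := by
      intro f hf
      by_contra hlt
      push_neg at hlt
      have hc : (0 : ℝ) ≤ u / φ f := div_nonneg hu0.le hlt.le
      have hmem := hcone _ hc f hf
      have h1 : φ ((u / φ f) • f) < u := hφC _ hmem
      rw [show φ ((u / φ f) • f) = u / φ f * φ f from φ.map_smul (u / φ f) f, div_mul_cancel₀ _ hlt.ne'] at h1
      exact lt_irrefl _ h1
    obtain ⟨g, hg⟩ := KY.exists_repr B φ
    have hg_eq : ∀ f : Lp ℝ p μ, φ f = ∫ ω, f ω * g ω ∂μ := fun f => hg f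
    have hg_int : Integrable (⇑g) μ := (Lp.memLp g).integrable hq
    have hg_nonneg : 0 ≤ᵐ[μ] ⇑g := by
      refine ae_nonneg_of_forall_setIntegral_nonneg hg_int ?_
      intro s hs hsμ
      have hsmem : MemLp (s.indicator fun _ => (1 : ℝ)) p μ :=
        memLp_indicator_const p hs (1 : ℝ) (Or.inr (measure_ne_top μ s))
      set y : Lp ℝ p μ := hsmem.toLp _ with hy
      have hy_coe : ⇑y =ᵐ[μ] s.indicator fun _ => (1 : ℝ) := MemLp.coeFn_toLp hsmem
      have hy_nonneg : ∀ᵐ ω ∂μ, 0 ≤ y ω := by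
        filter_upwards [hy_coe] with ω hω
        rw [hω]
        exact Set.indicator_nonneg (fun _ _ => zero_le_one) ω
      have hyC : -y ∈ C := hneg y hy_nonneg
      have h1 : φ (-y) ≤ 0 := hφ_nonpos _ hyC
      rw [show φ (-y) = -φ y from map_neg φ y, neg_nonpos] at h1
      have h2 : φ y = ∫ ω in s, g ω ∂μ := by
        rw [hg_eq y]
        have h3 : ∫ ω, y ω * g ω ∂μ = ∫ ω, s.indicator (fun ω' => g ω') ω ∂μ := by
          refine integral_congr_ae ?_
          filter_upwards [hy_coe] with ω hω
          rw [hω]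
          by_cases hωs : ω ∈ s <;> simp [hωs]
        rw [h3, integral_indicator hs]
      rw [← h2]
      exact h1
    refine ⟨g, ⟨hg_nonneg, fun f hf => by rw [← hg_eq f]; exact hφ_nonpos f hf⟩, ?_⟩
    have hxg : φ x = ∫ ω, A.indicator (fun _ => (1 : ℝ)) ω * g ω ∂μ := by
      rw [hg_eq x]
      refine integral_congr_ae ?_
      filter_upwards [hx_coe] with ω hω
      rw [hω]
    rw [← hxg]
    exact hu0.trans hφx
  -- 0 is admissible
  have h0G : (0 : Lp ℝ q μ) ∈ G := by
    constructor
    · filter_upwards [Lp.coeFn_zero ℝ q μ] with ω hω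
      simp [hω]
    · intro f hf
      have h1 : ∫ ω, f ω * (0 : Lp ℝ q μ) ω ∂μ = 0 := by
        rw [← integral_zero Ω ℝ (μ := μ)]
        refine integral_congr_ae ?_
        filter_upwards [Lp.coeFn_zero ℝ q μ] with ω hω
        rw [hω]; simp
      rw [h1]
  -- supremum of supports of admissible densities
  set sstar : ℝ≥0∞ := ⨆ g ∈ G, μ {ω | 0 < (g : Lp ℝ q μ) ω} with hsstar
  have hsstar_ne : sstar ≠ ∞ := by
    refine ne_of_lt (lt_of_le_of_lt ?_ ENNReal.one_lt_top)
    exact iSup₂_le fun g _ => prob_le_one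
  have hgn : ∀ n : ℕ, ∃ g ∈ G,
      sstar - ((n : ℝ≥0∞) + 1)⁻¹ ≤ μ {ω | 0 < (g : Lp ℝ q μ) ω} := by
    intro n
    rcases eq_or_ne sstar 0 with h0 | hne
    · exact ⟨0, h0G, by simp [h0, zero_tsub]⟩
    · have hlt : sstar - ((n : ℝ≥0∞) + 1)⁻¹ < sstar :=
        ENNReal.sub_lt_self hsstar_ne hne (by simp)
      rw [hsstar, lt_iSup_iff] at hlt
      obtain ⟨g, hlt⟩ := hlt
      rw [lt_iSup_iff] at hlt
      obtain ⟨hgG, hlt⟩ := hlt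
      exact ⟨g, hgG, hlt.le⟩
  choose gseq hgseqG hgseqle using hgn
  set a : ℕ → ℝ := fun n => ((2 : ℝ) ^ n)⁻¹ * (1 + ‖gseq n‖)⁻¹ with ha
  have ha_pos : ∀ n, 0 < a n := by
    intro n
    have h1 : (0 : ℝ) < 1 + ‖gseq n‖ := by positivity
    rw [ha]
    positivity
  have hsummable : Summable fun n => a n • gseq n := by
    refine Summable.of_norm ?_
    have hgeo : Summable fun n : ℕ => ((2 : ℝ) ^ n)⁻¹ := by
      simpa [one_div, inv_pow] using summable_geometric_two
    refine Summable.of_nonneg_of_le (fun n => norm_nonneg _) (fun n => ?_) hgeo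
    have h1 : (0 : ℝ) < 1 + ‖gseq n‖ := by positivity
    have h2 : (1 + ‖gseq n‖)⁻¹ * ‖gseq n‖ ≤ 1 := by
      rw [inv_mul_le_iff₀ h1]
      linarith [norm_nonneg (gseq n)]
    have h3 : ‖a n • gseq n‖ = a n * ‖gseq n‖ := by
      rw [norm_smul, Real.norm_eq_abs, abs_of_pos (ha_pos n)]
    rw [h3, ha]
    calc ((2 : ℝ) ^ n)⁻¹ * (1 + ‖gseq n‖)⁻¹ * ‖gseq n‖
        = ((2 : ℝ) ^ n)⁻¹ * ((1 + ‖gseq n‖)⁻¹ * ‖gseq n‖) := by ring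
      _ ≤ ((2 : ℝ) ^ n)⁻¹ * 1 := by
          refine mul_le_mul_of_nonneg_left h2 (by positivity)
      _ = ((2 : ℝ) ^ n)⁻¹ := mul_one _
  set ginf : Lp ℝ q μ := ∑' n, a n • gseq n with hginf
  have hhasSum : HasSum (fun n => a n • gseq n) ginf := hsummable.hasSum
  set S : ℕ → Lp ℝ q μ := fun N => ∑ i ∈ Finset.range N, a i • gseq i with hS
  have hpartial : Tendsto S atTop (𝓝 ginf) := hhasSum.tendsto_sum_nat
  have htends0 : Tendsto (fun N => eLpNorm (⇑(S N) - ⇑ginf) q μ) atTop (𝓝 0) := by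
    have h1 : Tendsto (fun N => ‖S N - ginf‖) atTop (𝓝 0) :=
      tendsto_iff_norm_sub_tendsto_zero.mp hpartial
    have h2 : ∀ N, eLpNorm (⇑(S N) - ⇑ginf) q μ = ENNReal.ofReal ‖S N - ginf‖ := by
      intro N
      rw [← eLpNorm_congr_ae (Lp.coeFn_sub (S N) ginf), Lp.norm_def,
        ENNReal.ofReal_toReal (Lp.eLpNorm_ne_top _)]
    simp only [h2]
    have h3 := (ENNReal.continuous_ofReal.tendsto 0).comp h1
    simpa [Function.comp_def] using h3
  have htm : TendstoInMeasure μ (fun N => ⇑(S N)) atTop ⇑ginf :=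
    tendstoInMeasure_of_tendsto_eLpNorm (zero_lt_one.trans_le hq).ne'
      (fun N => Lp.aestronglyMeasurable _) (Lp.aestronglyMeasurable _) htends0
  obtain ⟨ns, hns_mono, hae⟩ := htm.exists_seq_tendsto_ae
  have hae_props : ∀ᵐ ω ∂μ, 0 ≤ ginf ω ∧ ∀ n : ℕ, a n * gseq n ω ≤ ginf ω := by
    have hcoeS : ∀ᵐ ω ∂μ, ∀ N, S N ω = ∑ i ∈ Finset.range N, a i * gseq i ω := by
      rw [ae_all_iff]
      intro N
      have h2 := KY.coeFn_sum_range (fun i => a i • gseq i) N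
      have h3 : ∀ᵐ ω ∂μ, ∀ i : ℕ, (a i • gseq i : Lp ℝ q μ) ω = a i * gseq i ω := by
        rw [ae_all_iff]
        intro i
        filter_upwards [Lp.coeFn_smul (a i) (gseq i)] with ω hω
        rw [hω]; simp
      filter_upwards [h2, h3] with ω hω h3ω
      rw [hω]
      exact Finset.sum_congr rfl fun i _ => h3ω i
    have hnn : ∀ᵐ ω ∂μ, ∀ n : ℕ, 0 ≤ gseq n ω := ae_all_iff.mpr fun n => (hgseqG n).1
    filter_upwards [hae, hcoeS, hnn] with ω hω hSω hnnω
    have hmono : Monotone fun N => ∑ i ∈ Finset.range N, a i * gseq i ω := by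
      intro N M hNM
      exact Finset.sum_le_sum_of_subset_of_nonneg (Finset.range_subset_range.mpr hNM)
        fun i _ _ => mul_nonneg (ha_pos i).le (hnnω i)
    have hlim : Tendsto (fun k => ∑ i ∈ Finset.range (ns k), a i * gseq i ω) atTop
        (𝓝 (ginf ω)) :=
      Tendsto.congr (fun k => hSω (ns k)) hω
    have hge : ∀ N, ∑ i ∈ Finset.range N, a i * gseq i ω ≤ ginf ω := by
      intro N
      refine ge_of_tendsto hlim ?_
      filter_upwards [eventually_ge_atTop N] with k hk
      exact hmono (hk.trans (hns_mono.le_apply))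
    constructor
    · simpa using hge 0
    · intro n
      have h1 := hge (n + 1)
      have h2 : a n * gseq n ω ≤ ∑ i ∈ Finset.range (n + 1), a i * gseq i ω := by
        rw [Finset.sum_range_succ]
        have h4 : 0 ≤ ∑ i ∈ Finset.range n, a i * gseq i ω :=
          Finset.sum_nonneg fun i _ => mul_nonneg (ha_pos i).le (hnnω i)
        linarith
      exact h2.trans h1
  have hginf_nonneg : 0 ≤ᵐ[μ] ⇑ginf := by
    filter_upwards [hae_props] with ω h
    exact h.1
  have hginf_pair : ∀ f ∈ C, ∫ ω, f ω * ginf ω ∂μ ≤ 0 := by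
    intro f hf
    have hbound : ∀ g : Lp ℝ q μ, ‖(B f) g‖ ≤ ‖f‖ * ‖g‖ := fun g => by
      rw [Real.norm_eq_abs]
      exact KY.pair_bound hpq f g
    set Φ : Lp ℝ q μ →L[ℝ] ℝ := LinearMap.mkContinuous (B f) ‖f‖ hbound with hΦ
    have hΦ_apply : ∀ g : Lp ℝ q μ, Φ g = ∫ ω, f ω * g ω ∂μ := fun g => rfl
    have h1 : Φ ginf = ∑' n, Φ (a n • gseq n) := by
      rw [hginf]
      exact Φ.map_tsum hsummable
    have h2 : ∀ n, Φ (a n • gseq n) ≤ 0 := by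
      intro n
      rw [_root_.map_smul, smul_eq_mul]
      have h3 := (hgseqG n).2 f hf
      rw [hΦ_apply]
      have := mul_le_mul_of_nonneg_left h3 (ha_pos n).le
      simpa using this
    have h4 : Φ ginf ≤ 0 := by
      rw [h1]
      have h5 : 0 ≤ ∑' n, -Φ (a n • gseq n) := tsum_nonneg fun n => neg_nonneg.mpr (h2 n)
      rw [tsum_neg] at h5
      linarith
    rw [← hΦ_apply]
    exact h4
  have hginfG : ginf ∈ G := ⟨hginf_nonneg, hginf_pair⟩
  have hsupp_n : ∀ n, μ {ω | 0 < gseq n ω} ≤ μ {ω | 0 < ginf ω} := by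
    intro n
    refine measure_mono_ae ?_
    filter_upwards [hae_props] with ω h hmem
    exact lt_of_lt_of_le (mul_pos (ha_pos n) hmem) (h.2 n)
  have hm_ge : sstar ≤ μ {ω | 0 < ginf ω} := by
    refine ENNReal.le_of_forall_pos_le_add fun ε hε hlt => ?_
    obtain ⟨n, hn⟩ := ENNReal.exists_inv_nat_lt
      (show ((ε : ℝ≥0∞)) ≠ 0 by exact_mod_cast hε.ne')
    have h1 : sstar - ((n : ℝ≥0∞) + 1)⁻¹ ≤ μ {ω | 0 < ginf ω} :=
      (hgseqle n).trans (hsupp_n n)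
    have h2 : sstar ≤ μ {ω | 0 < ginf ω} + ((n : ℝ≥0∞) + 1)⁻¹ := tsub_le_iff_right.mp h1
    refine h2.trans (add_le_add le_rfl ?_)
    have h3 : ((n : ℝ≥0∞) + 1)⁻¹ ≤ ((n : ℝ≥0∞))⁻¹ := by gcongr; exact le_self_add
    exact h3.trans hn.le
  have hmeasApos : MeasurableSet {ω | 0 < ginf ω} :=
    measurableSet_lt measurable_const (Lp.stronglyMeasurable ginf).measurable
  rcases eq_or_ne (μ ({ω | 0 < ginf ω}ᶜ)) 0 with hnull | hpos'
  · -- conclusion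
    have hae_pos : ∀ᵐ ω ∂μ, 0 < ginf ω := by
      rw [ae_iff]
      rw [show {ω | ¬ (0 < ginf ω)} = {ω | 0 < ginf ω}ᶜ by rw [Set.compl_setOf]]
      exact hnull
    have hint : Integrable ⇑ginf μ := (Lp.memLp ginf).integrable hq
    have hμApos : (1 : ℝ≥0∞) ≤ μ {ω | 0 < ginf ω} := by
      have h2 : μ (univ : Set Ω) ≤ μ {ω | 0 < ginf ω} + μ ({ω | 0 < ginf ω}ᶜ) := by
        rw [← Set.union_compl_self {ω | 0 < ginf ω}]
        exact measure_union_le _ _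
      rwa [measure_univ, hnull, add_zero] at h2
    have hc_pos : 0 < ∫ ω, ginf ω ∂μ := by
      rw [integral_pos_iff_support_of_nonneg_ae hginf_nonneg hint]
      have hsub : {ω | 0 < ginf ω} ⊆ Function.support ⇑ginf := fun ω h => ne_of_gt h
      calc (0 : ℝ≥0∞) < 1 := zero_lt_one
        _ ≤ μ {ω | 0 < ginf ω} := hμApos
        _ ≤ μ (Function.support ⇑ginf) := measure_mono hsub
    set c : ℝ := ∫ ω, ginf ω ∂μ with hc
    refine ⟨fun ω => c⁻¹ * ginf ω, ?_, ?_, ?_, ?_⟩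
    · filter_upwards [hae_pos] with ω hω
      exact mul_pos (inv_pos.mpr hc_pos) hω
    · exact (Lp.memLp ginf).const_mul _
    · rw [integral_const_mul, ← hc, inv_mul_cancel₀ hc_pos.ne']
    · intro f hf
      have h1 : ∫ ω, (c⁻¹ * ginf ω) * f ω ∂μ = c⁻¹ * ∫ ω, f ω * ginf ω ∂μ := by
        rw [← integral_const_mul]
        exact integral_congr_ae (Eventually.of_forall fun ω => by ring)
      rw [h1]
      have h3 := hginf_pair f hf
      have h4 := mul_le_mul_of_nonneg_left h3 (inv_nonneg.mpr hc_pos.le)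
      simpa using h4
  · -- contradiction branch
    exfalso
    have hApos' : 0 < μ ({ω | 0 < ginf ω}ᶜ) := lt_of_le_of_ne zero_le (Ne.symm hpos')
    obtain ⟨gx, hgxG, hgx_pos⟩ := hsep _ hmeasApos.compl hApos'
    have hmeasD : MeasurableSet ({ω | 0 < ginf ω}ᶜ ∩ {ω | 0 < gx ω}) :=
      hmeasApos.compl.inter
        (measurableSet_lt measurable_const (Lp.stronglyMeasurable gx).measurable)
    have hμD : 0 < μ ({ω | 0 < ginf ω}ᶜ ∩ {ω | 0 < gx ω}) := by
      by_contra hcon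
      push_neg at hcon
      have hD0 : μ ({ω | 0 < ginf ω}ᶜ ∩ {ω | 0 < gx ω}) = 0 :=
        le_antisymm hcon zero_le
      have hint0 : ∫ ω, ({ω | 0 < ginf ω}ᶜ).indicator (fun _ => (1 : ℝ)) ω * gx ω ∂μ = 0 := by
        rw [← integral_zero Ω ℝ (μ := μ)]
        refine integral_congr_ae ?_
        have hDae : ∀ᵐ ω ∂μ, ω ∉ ({ω | 0 < ginf ω}ᶜ ∩ {ω | 0 < gx ω}) := by
          rw [ae_iff]
          convert hD0 using 2
          ext ω
          simp
        filter_upwards [hDae, hgxG.1] with ω hωD hωg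
        by_cases hωA : ω ∈ ({ω | 0 < ginf ω}ᶜ)
        · have h5 : ¬ 0 < gx ω := fun hgt => hωD ⟨hωA, hgt⟩
          have h6 : gx ω = 0 := le_antisymm (not_lt.mp h5) hωg
          simp [Set.indicator_of_mem hωA, h6]
        · simp [Set.indicator_of_notMem hωA]
      rw [hint0] at hgx_pos
      exact lt_irrefl _ hgx_pos
    have hg'G : ginf + gx ∈ G := by
      constructor
      · filter_upwards [Lp.coeFn_add ginf gx, hginf_nonneg, hgxG.1] with ω h1 h2 h3
        rw [h1]
        exact add_nonneg h2 h3
      · intro f hf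
        have h1 : ∫ ω, f ω * (ginf + gx) ω ∂μ
            = ∫ ω, f ω * ginf ω ∂μ + ∫ ω, f ω * gx ω ∂μ := by
          rw [← integral_add (KY.integrable_mul hpq f ginf) (KY.integrable_mul hpq f gx)]
          refine integral_congr_ae ?_
          filter_upwards [Lp.coeFn_add ginf gx] with ω hω
          rw [hω]
          simp [mul_add]
        rw [h1]
        have h2 := hginf_pair f hf
        have h3 := hgxG.2 f hf
        linarith
    have hsupp' : μ ({ω | 0 < ginf ω} ∪ ({ω | 0 < ginf ω}ᶜ ∩ {ω | 0 < gx ω}))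
        ≤ μ {ω | 0 < (ginf + gx : Lp ℝ q μ) ω} := by
      refine measure_mono_ae ?_
      filter_upwards [Lp.coeFn_add ginf gx, hginf_nonneg, hgxG.1] with ω h1 h2 h3 hmem
      show 0 < (ginf + gx : Lp ℝ q μ) ω
      rw [h1]
      simp only [Pi.add_apply]
      rcases hmem with h | h
      · exact add_pos_of_pos_of_nonneg h h3
      · exact add_pos_of_nonneg_of_pos h2 h.2
    have hunion : μ ({ω | 0 < ginf ω} ∪ ({ω | 0 < ginf ω}ᶜ ∩ {ω | 0 < gx ω}))
        = μ {ω | 0 < ginf ω} + μ ({ω | 0 < ginf ω}ᶜ ∩ {ω | 0 < gx ω}) :=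
      measure_union (disjoint_compl_right.mono_right Set.inter_subset_left) hmeasD
    have hle_sstar : μ {ω | 0 < (ginf + gx : Lp ℝ q μ) ω} ≤ sstar := by
      rw [hsstar]
      exact le_iSup₂ (f := fun (g : Lp ℝ q μ) (_ : g ∈ G) => μ {ω | 0 < g ω}) (ginf + gx) hg'G
    have hfinal : sstar + μ ({ω | 0 < ginf ω}ᶜ ∩ {ω | 0 < gx ω}) ≤ sstar := by
      calc sstar + μ ({ω | 0 < ginf ω}ᶜ ∩ {ω | 0 < gx ω})
          ≤ μ {ω | 0 < ginf ω} + μ ({ω | 0 < ginf ω}ᶜ ∩ {ω | 0 < gx ω}) :=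
            add_le_add hm_ge le_rfl
        _ = μ ({ω | 0 < ginf ω} ∪ ({ω | 0 < ginf ω}ᶜ ∩ {ω | 0 < gx ω})) := hunion.symm
        _ ≤ μ {ω | 0 < (ginf + gx : Lp ℝ q μ) ω} := hsupp'
        _ ≤ sstar := hle_sstar
    have hlt : sstar < sstar + μ ({ω | 0 < ginf ω}ᶜ ∩ {ω | 0 < gx ω}) :=
      ENNReal.lt_add_right hsstar_ne hμD.ne'
    exact absurd hfinal (not_le.mpr hlt)
end
end

section
/- Let $(X^n)_{n\ge0}$ be a sequence of semimartingales with $X^n_0 = 0$ converging pathwise uniformly in probability on $[0,1]$ to a càdlàg process $X$. Then there exists $C > 0$ such that, defining $\check X^{n} = \sum_{s \le \cdot} \Delta X^n_s 1_{\{|\Delta X^n_s| > C\}}$ and $\check X = \sum_{s \le \cdot} \Delta X_s 1_{\{|\Delta X_s| > C\}}$, the total variation of $\check X^n - \check X$ over $[0,1]$ converges to $0$ in probability. -/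
open MeasureTheory Filter Set
open scoped ENNReal Topology

noncomputable section
open Classical

variable {Ω : Type*}

namespace BigJumpAux

/-- Cadlag function on `ℝ`. -/
def CadlagFun (f : ℝ → ℝ) : Prop :=
  (∀ t, ContinuousWithinAt f (Ici t) t) ∧ ∀ t, ∃ l, Tendsto f (𝓝[<] t) (𝓝 l)

/-- The jump of a function. -/
def jumpF (f : ℝ → ℝ) (t : ℝ) : ℝ := f t - Function.leftLim f t

lemma CadlagFun.sub {f g : ℝ → ℝ} (hf : CadlagFun f) (hg : CadlagFun g) :
    CadlagFun (fun t => f t - g t) := by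
  refine ⟨fun t => (hf.1 t).sub (hg.1 t), fun t => ?_⟩
  obtain ⟨l, hl⟩ := hf.2 t
  obtain ⟨l', hl'⟩ := hg.2 t
  exact ⟨l - l', hl.sub hl'⟩

lemma CadlagFun.tendsto_leftLim {f : ℝ → ℝ} (hf : CadlagFun f) (t : ℝ) :
    Tendsto f (𝓝[<] t) (𝓝 (Function.leftLim f t)) := by
  obtain ⟨l, hl⟩ := hf.2 t
  rwa [leftLim_eq_of_tendsto hl]

lemma jumpF_sub {f g : ℝ → ℝ} (hf : CadlagFun f) (hg : CadlagFun g) (t : ℝ) :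
    jumpF (fun s => f s - g s) t = jumpF f t - jumpF g t := by
  have h : Tendsto (fun s => f s - g s) (𝓝[<] t)
      (𝓝 (Function.leftLim f t - Function.leftLim g t)) :=
    (hf.tendsto_leftLim t).sub (hg.tendsto_leftLim t)
  have h2 : Function.leftLim (fun s => f s - g s) t
      = Function.leftLim f t - Function.leftLim g t :=
    leftLim_eq_of_tendsto h
  simp only [jumpF, h2]
  ring

lemma CadlagFun.exists_bound {f : ℝ → ℝ} (hf : CadlagFun f) :
    ∃ B, ∀ t ∈ Icc (0:ℝ) 1, |f t| ≤ B := by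
  have key : ∀ x : ℝ, ∃ M : ℝ, ∃ δ : ℝ, 0 < δ ∧ ∀ t, dist t x < δ → |f t| ≤ M := by
    intro x
    obtain ⟨δ₁, hδ₁, h₁⟩ := Metric.continuousWithinAt_iff.mp (hf.1 x) 1 one_pos
    obtain ⟨δ₂, hδ₂, h₂⟩ := Metric.tendsto_nhdsWithin_nhds.mp (hf.tendsto_leftLim x) 1 one_pos
    refine ⟨max (|f x| + 1) (|Function.leftLim f x| + 1), min δ₁ δ₂, lt_min hδ₁ hδ₂, ?_⟩
    intro t ht
    rcases le_or_gt x t with hxt | hxt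
    · have := h₁ hxt (lt_of_lt_of_le ht (min_le_left _ _))
      rw [Real.dist_eq] at this
      have : |f t| ≤ |f x| + 1 := by
        have := abs_sub_abs_le_abs_sub (f t) (f x)
        linarith
      exact this.trans (le_max_left _ _)
    · have := h₂ hxt (lt_of_lt_of_le ht (min_le_right _ _))
      rw [Real.dist_eq] at this
      have : |f t| ≤ |Function.leftLim f x| + 1 := by
        have := abs_sub_abs_le_abs_sub (f t) (Function.leftLim f x)
        linarith
      exact this.trans (le_max_right _ _)
  choose M δ hδ hM using key
  obtain ⟨T, -, hT⟩ := isCompact_Icc.elim_nhds_subcover (fun x => Metric.ball x (δ x))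
    (fun x _ => Metric.ball_mem_nhds x (hδ x))
  refine ⟨∑ x ∈ T, |M x|, fun t ht => ?_⟩
  obtain ⟨x, hxT, hx⟩ := Set.mem_iUnion₂.mp (hT ht)
  calc |f t| ≤ M x := hM x t (Metric.mem_ball.mp hx)
    _ ≤ |M x| := le_abs_self _
    _ ≤ ∑ y ∈ T, |M y| := Finset.single_le_sum (fun y _ => abs_nonneg (M y)) hxT

lemma CadlagFun.abs_leftLim_le {f : ℝ → ℝ} (hf : CadlagFun f) {B s : ℝ}
    (hs : s ∈ Ioc (0:ℝ) 1) (hB : ∀ t ∈ Icc (0:ℝ) 1, |f t| ≤ B) :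
    |Function.leftLim f s| ≤ B := by
  have h := hf.tendsto_leftLim s
  have hev : ∀ᶠ t in 𝓝[<] s, |f t| ≤ B := by
    have hmem : Ioo (max 0 (s - 1)) s ∈ 𝓝[<] s := by
      apply Ioo_mem_nhdsLT_of_mem
      constructor
      · exact max_lt hs.1 (by linarith [hs.2])
      · exact le_refl s
    filter_upwards [hmem] with t ht
    exact hB t ⟨le_of_lt (lt_of_le_of_lt (le_max_left _ _) ht.1), ht.2.le.trans hs.2⟩
  exact le_of_tendsto h.abs hev

lemma CadlagFun.finite_jumps {f : ℝ → ℝ} (hf : CadlagFun f) {c : ℝ} (hc : 0 < c) :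
    {s : ℝ | s ∈ Ioc (0:ℝ) 1 ∧ c < |jumpF f s|}.Finite := by
  by_contra hinf
  set S := {s : ℝ | s ∈ Ioc (0:ℝ) 1 ∧ c < |jumpF f s|} with hS
  have hinf' : S.Infinite := hinf
  have e := hinf'.natEmbedding
  set u : ℕ → ℝ := fun n => (e n : ℝ) with hu
  have huS : ∀ n, u n ∈ S := fun n => (e n).2
  have huinj : Function.Injective u := fun a b h => e.injective (Subtype.ext h)
  have hubd : ∀ n, u n ∈ Icc (0:ℝ) 1 := fun n => ⟨(huS n).1.1.le, (huS n).1.2⟩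
  obtain ⟨x, hx, φ, hφ, hconv⟩ := isCompact_Icc.tendsto_subseq hubd
  -- no jumps of size > c near x, except at x
  obtain ⟨δ, hδpos, hnear⟩ : ∃ δ, 0 < δ ∧ ∀ s ∈ S, |s - x| < δ → s = x := by
    obtain ⟨δ₁, hδ₁, h₁⟩ := Metric.continuousWithinAt_iff.mp (hf.1 x) (c/3) (by linarith)
    obtain ⟨δ₂, hδ₂, h₂⟩ := Metric.tendsto_nhdsWithin_nhds.mp (hf.tendsto_leftLim x)
      (c/3) (by linarith)
    refine ⟨min δ₁ δ₂, lt_min hδ₁ hδ₂, fun s hsS hsx => ?_⟩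
    by_contra hne
    have hjs : c < |jumpF f s| := hsS.2
    rcases lt_or_gt_of_ne hne with hlt | hgt
    · -- s < x : both f s and leftLim f s are within c/3 of leftLim f x
      have hfs : |f s - Function.leftLim f x| < c/3 := by
        have := h₂ hlt (lt_of_lt_of_le (by rw [Real.dist_eq]; exact hsx) (min_le_right _ _))
        rwa [Real.dist_eq] at this
      have hll : |Function.leftLim f s - Function.leftLim f x| ≤ c/3 := by
        have hev : ∀ᶠ t in 𝓝[<] s, |f t - Function.leftLim f x| ≤ c/3 := by
          have hmem : Ioo (x - min δ₁ δ₂) s ∈ 𝓝[<] s := by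
            apply Ioo_mem_nhdsLT_of_mem
            refine ⟨?_, le_refl s⟩
            have : |s - x| < min δ₁ δ₂ := hsx
            have := abs_lt.mp this
            linarith [this.1]
          filter_upwards [hmem] with t ht
          have htx : t < x := lt_trans ht.2 hlt
          have hdist : dist t x < δ₂ := by
            rw [Real.dist_eq, abs_lt]
            constructor
            · have := ht.1; have h3 := min_le_right δ₁ δ₂; linarith
            · linarith
          exact (le_of_lt (by rw [← Real.dist_eq]; exact h₂ htx hdist))
        exact le_of_tendsto ((hf.tendsto_leftLim s).sub_const _).abs hev
      have : |jumpF f s| ≤ 2 * (c/3) := by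
        have : jumpF f s = (f s - Function.leftLim f x)
            - (Function.leftLim f s - Function.leftLim f x) := by
          simp only [jumpF]; ring
        rw [this]
        calc |_ - _| ≤ _ + _ := abs_sub _ _
          _ ≤ 2 * (c/3) := by linarith [hfs.le, hll]
      linarith
    · -- x < s
      have hfs : |f s - f x| < c/3 := by
        have := h₁ hgt.le (lt_of_lt_of_le (by rw [Real.dist_eq]; exact hsx) (min_le_left _ _))
        rwa [Real.dist_eq] at this
      have hll : |Function.leftLim f s - f x| ≤ c/3 := by
        have hev : ∀ᶠ t in 𝓝[<] s, |f t - f x| ≤ c/3 := by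
          have hmem : Ioo x s ∈ 𝓝[<] s := Ioo_mem_nhdsLT_of_mem ⟨hgt, le_refl s⟩
          filter_upwards [hmem] with t ht
          have hdist : dist t x < δ₁ := by
            rw [Real.dist_eq, abs_lt]
            have : |s - x| < min δ₁ δ₂ := hsx
            have h4 := abs_lt.mp this
            constructor
            · have h3 := min_le_left δ₁ δ₂; linarith [ht.1]
            · have h3 := min_le_left δ₁ δ₂; linarith [ht.2, h4.1]
          exact (le_of_lt (by rw [← Real.dist_eq]; exact h₁ ht.1.le hdist))
        exact le_of_tendsto ((hf.tendsto_leftLim s).sub_const _).abs hev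
      have : |jumpF f s| ≤ 2 * (c/3) := by
        have : jumpF f s = (f s - f x) - (Function.leftLim f s - f x) := by
          simp only [jumpF]; ring
        rw [this]
        calc |_ - _| ≤ _ + _ := abs_sub _ _
          _ ≤ 2 * (c/3) := by linarith [hfs.le, hll]
      linarith
  -- find a contradiction
  have hev : ∀ᶠ n in atTop, |u (φ n) - x| < δ := by
    have := Metric.tendsto_nhds.mp hconv δ hδpos
    simpa [Real.dist_eq] using this
  obtain ⟨N, hN⟩ := eventually_atTop.mp hev
  have h1 : u (φ N) = x := hnear _ (huS _) (hN N (le_refl N))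
  have h2 : u (φ (N+1)) = x := hnear _ (huS _) (hN (N+1) (by omega))
  exact absurd (huinj (h1.trans h2.symm)) (ne_of_lt (hφ (by omega)))

lemma exists_jump_of_osc {f : ℝ → ℝ} (hf : CadlagFun f) {u v c : ℝ} (hc : 0 < c)
    (p q : ℕ → ℝ)
    (h : ∀ m, u ≤ p m ∧ p m < q m ∧ q m ≤ v ∧ q m - p m < 1/(m+1) ∧ c ≤ |f (q m) - f (p m)|) :
    ∃ s ∈ Ioc u v, c ≤ |jumpF f s| := by
  have hp : ∀ m, p m ∈ Icc u v := fun m =>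
    ⟨(h m).1, le_of_lt (lt_of_lt_of_le (h m).2.1 (h m).2.2.1)⟩
  obtain ⟨x, hx, φ, hφ, hpconv⟩ := isCompact_Icc.tendsto_subseq hp
  have hqp : Tendsto (fun m => q (φ m) - p (φ m)) atTop (𝓝 0) := by
    have h0 : ∀ m : ℕ, 0 ≤ q (φ m) - p (φ m) := fun m => sub_nonneg.mpr (h (φ m)).2.1.le
    have h1 : ∀ m : ℕ, q (φ m) - p (φ m) ≤ 1/((m:ℝ)+1) := by
      intro m
      refine le_of_lt (lt_of_lt_of_le (h (φ m)).2.2.2.1 ?_)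
      apply one_div_le_one_div_of_le (by positivity)
      have : m ≤ φ m := hφ.le_apply
      exact_mod_cast Nat.add_le_add_right this 1
    exact squeeze_zero h0 h1 tendsto_one_div_add_atTop_nhds_zero_nat
  have hqconv : Tendsto (fun m => q (φ m)) atTop (𝓝 x) := by
    have := hqp.add hpconv
    simp only [Function.comp] at this ⊢
    simpa using this
  have hpconv' : Tendsto (fun m => p (φ m)) atTop (𝓝 x) := hpconv
  by_cases hA : ∃ᶠ m in atTop, q (φ m) < x
  · exfalso
    have hL : (atTop ⊓ 𝓟 {m | q (φ m) < x}).NeBot := frequently_iff_neBot.mp hA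
    set L := atTop ⊓ 𝓟 {m | q (φ m) < x}
    have hmemL : ∀ᶠ m in L, q (φ m) < x := by
      refine eventually_inf_principal.mpr (Eventually.of_forall fun m hm => hm)
    have hqL : Tendsto (fun m => q (φ m)) L (𝓝[<] x) := by
      rw [tendsto_nhdsWithin_iff]
      exact ⟨hqconv.mono_left inf_le_left, hmemL⟩
    have hpL : Tendsto (fun m => p (φ m)) L (𝓝[<] x) := by
      rw [tendsto_nhdsWithin_iff]
      refine ⟨hpconv'.mono_left inf_le_left, ?_⟩
      filter_upwards [hmemL] with m hm
      exact lt_trans (h (φ m)).2.1 hm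
    have h1 : Tendsto (fun m => f (q (φ m)) - f (p (φ m))) L (𝓝 0) := by
      have := ((hf.tendsto_leftLim x).comp hqL).sub ((hf.tendsto_leftLim x).comp hpL)
      simpa using this
    have : c ≤ |(0:ℝ)| :=
      ge_of_tendsto h1.abs (Eventually.of_forall fun m => (h (φ m)).2.2.2.2)
    simp at this; linarith
  · by_cases hB : ∃ᶠ m in atTop, x ≤ p (φ m)
    · exfalso
      have hL : (atTop ⊓ 𝓟 {m | x ≤ p (φ m)}).NeBot := frequently_iff_neBot.mp hB
      set L := atTop ⊓ 𝓟 {m | x ≤ p (φ m)}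
      have hmemL : ∀ᶠ m in L, x ≤ p (φ m) :=
        eventually_inf_principal.mpr (Eventually.of_forall fun m hm => hm)
      have hpL : Tendsto (fun m => p (φ m)) L (𝓝[Ici x] x) := by
        rw [tendsto_nhdsWithin_iff]
        exact ⟨hpconv'.mono_left inf_le_left, hmemL⟩
      have hqL : Tendsto (fun m => q (φ m)) L (𝓝[Ici x] x) := by
        rw [tendsto_nhdsWithin_iff]
        refine ⟨hqconv.mono_left inf_le_left, ?_⟩
        filter_upwards [hmemL] with m hm
        exact le_trans hm (h (φ m)).2.1.le
      have h1 : Tendsto (fun m => f (q (φ m)) - f (p (φ m))) L (𝓝 0) := by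
        have := (Tendsto.comp (hf.1 x) hqL).sub (Tendsto.comp (hf.1 x) hpL)
        simpa using this
      have : c ≤ |(0:ℝ)| :=
        ge_of_tendsto h1.abs ((Eventually.of_forall fun m => (h (φ m)).2.2.2.2))
      simp at this; linarith
    · rw [not_frequently] at hA hB
      have hA' : ∀ᶠ m in atTop, x ≤ q (φ m) := by
        filter_upwards [hA] with m hm; exact not_lt.mp hm
      have hB' : ∀ᶠ m in atTop, p (φ m) < x := by
        filter_upwards [hB] with m hm; exact not_le.mp hm
      have hpL : Tendsto (fun m => p (φ m)) atTop (𝓝[<] x) := by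
        rw [tendsto_nhdsWithin_iff]; exact ⟨hpconv', hB'⟩
      have hqL : Tendsto (fun m => q (φ m)) atTop (𝓝[Ici x] x) := by
        rw [tendsto_nhdsWithin_iff]; exact ⟨hqconv, hA'⟩
      have h1 : Tendsto (fun m => f (q (φ m)) - f (p (φ m))) atTop
          (𝓝 (f x - Function.leftLim f x)) :=
        (Tendsto.comp (hf.1 x) hqL).sub ((hf.tendsto_leftLim x).comp hpL)
      have hcle : c ≤ |jumpF f x| :=
        ge_of_tendsto h1.abs (Eventually.of_forall fun m => (h (φ m)).2.2.2.2)
      obtain ⟨m, hm1, hm2⟩ := (hB'.and (Eventually.of_forall fun m => (h (φ m)).1)).exists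
      exact ⟨x, ⟨lt_of_le_of_lt hm2 hm1, hx.2⟩, hcle⟩

lemma osc_of_jump {f : ℝ → ℝ} (hf : CadlagFun f) {u v : ℚ} {s c : ℝ}
    (hs : s ∈ Ioc (u:ℝ) (v:ℝ)) (hj : c < |jumpF f s|) :
    ∃ j : ℕ, ∀ m : ℕ, ∃ p q : ℚ, u ≤ p ∧ p < q ∧ q ≤ v ∧
      ((q:ℝ) - (p:ℝ) < 1/(m+1)) ∧ c + 1/(j+1) ≤ |f q - f p| := by
  set l := Function.leftLim f s with hl
  obtain ⟨j, hj3⟩ := exists_nat_one_div_lt (show (0:ℝ) < (|f s - l| - c)/3 by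
    simp only [jumpF] at hj; linarith)
  have hj3' : c + 3 * (1/((j:ℝ)+1)) < |f s - l| := by
    have : (0:ℝ) < (j:ℝ)+1 := by positivity
    nlinarith [hj3]
  set ε := 1/((j:ℝ)+1) with hε
  have hεpos : 0 < ε := by positivity
  refine ⟨j, fun m => ?_⟩
  set d := 1/((m:ℝ)+1) with hd
  have hdpos : 0 < d := by positivity
  -- left point
  have hlev : ∀ᶠ t in 𝓝[<] s, dist (f t) l < ε :=
    Metric.tendsto_nhds.mp (hf.tendsto_leftLim s) ε hεpos
  obtain ⟨a₀, ha₀, hIoo⟩ := mem_nhdsLT_iff_exists_Ioo_subset.mp hlev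
  have ha' : max a₀ (max (u:ℝ) (s - d/2)) < s :=
    max_lt ha₀ (max_lt hs.1 (by linarith))
  obtain ⟨P, hP1, hP2⟩ := exists_rat_btwn ha'
  have hPu : u < P := by
    have : (u:ℝ) < (P:ℝ) := lt_of_le_of_lt ((le_max_left _ _).trans (le_max_right a₀ _)) hP1
    exact_mod_cast this
  have hPmem : (P:ℝ) ∈ Ioo a₀ s := ⟨lt_of_le_of_lt (le_max_left _ _) hP1, hP2⟩
  have hPl : |f P - l| < ε := by
    have := hIoo hPmem
    simp only [mem_setOf_eq, Real.dist_eq] at this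
    exact this
  have hPd : s - (P:ℝ) < d/2 := by
    have : s - d/2 ≤ max a₀ (max (u:ℝ) (s - d/2)) := (le_max_right _ _).trans (le_max_right a₀ _)
    linarith [hP1]
  -- right point
  rcases eq_or_lt_of_le hs.2 with hsv | hsv
  · -- s = v
    refine ⟨P, v, hPu.le, ?_, le_refl v, ?_, ?_⟩
    · exact_mod_cast hP2.trans_eq hsv
    · rw [← hsv]; linarith
    · rw [← hsv]
      have : |f s - f P| ≥ |f s - l| - |f P - l| := by
        have := abs_sub_abs_le_abs_sub (f s - l) (f P - l)
        have h2 : (f s - l) - (f P - l) = f s - f P := by ring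
        rw [h2] at this
        linarith [abs_sub_abs_le_abs_sub (f s - l) (f P - l)]
      linarith [hPl]
  · -- s < v
    obtain ⟨δ, hδpos, hδ⟩ := Metric.continuousWithinAt_iff.mp (hf.1 s) ε hεpos
    have hb' : s < min (s + δ) (min (v:ℝ) (s + d/2)) :=
      lt_min (by linarith) (lt_min hsv (by linarith))
    obtain ⟨Q, hQ1, hQ2⟩ := exists_rat_btwn hb'
    have hQs : |f Q - f s| < ε := by
      have h1 : (Q:ℝ) ∈ Ici s := le_of_lt hQ1
      have h2 : dist (Q:ℝ) s < δ := by
        rw [Real.dist_eq, abs_lt]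
        constructor
        · linarith [hQ1]
        · have := hQ2.trans_le (min_le_left _ _); linarith
      have := hδ h1 h2
      rwa [Real.dist_eq] at this
    have hQv : (Q:ℝ) < v := hQ2.trans_le ((min_le_right _ _).trans (min_le_left _ _))
    have hQd : (Q:ℝ) - s < d/2 := by
      have := hQ2.trans_le ((min_le_right _ _).trans (min_le_right _ _)); linarith
    refine ⟨P, Q, hPu.le, ?_, ?_, ?_, ?_⟩
    · have : (P:ℝ) < Q := hP2.trans hQ1
      exact_mod_cast this
    · exact_mod_cast hQv.le
    · linarith
    · have h1 : |f Q - f P| ≥ |f s - l| - |f Q - f s| - |f P - l| := by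
        have e1 : f Q - f P = (f s - l) + (f Q - f s) - (f P - l) := by ring
        rw [e1]
        have t1 := abs_sub (f s - l + (f Q - f s)) (f P - l)
        have t2 := abs_add_le (f s - l) (f Q - f s)
        have t3 := abs_sub_abs_le_abs_sub (f s - l + (f Q - f s)) (f P - l)
        have t4 := abs_add_le (f P - l) (f s - l + (f Q - f s) - (f P - l))
        have e2 : f P - l + (f s - l + (f Q - f s) - (f P - l)) = f s - l + (f Q - f s) := by
          ring
        rw [e2] at t4
        have t5 := abs_sub_abs_le_abs_sub (f s - l) (-(f Q - f s))
        have e3 : f s - l - -(f Q - f s) = f s - l + (f Q - f s) := by ring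
        rw [e3, abs_neg] at t5
        linarith
      linarith [hPl, hQs]

variable {m' : MeasurableSpace Ω}

/-- The event that `Y` has a jump of size `> c` at some time in `(u, v]`. -/
def jEv (Y : ℝ → Ω → ℝ) (c u v : ℝ) : Set Ω :=
  {ω | ∃ s ∈ Ioc u v, c < |jumpF (fun t => Y t ω) s|}

/-- The event that `Y` has (at least) `k` distinct jumps of size `> c` in `(u, v]`. -/
def kEv (Y : ℝ → Ω → ℝ) (c : ℝ) (k : ℕ) (u v : ℝ) : Set Ω :=
  {ω | ∃ T : Finset ℝ, T.card = k ∧ ∀ s ∈ T, s ∈ Ioc u v ∧ c < |jumpF (fun t => Y t ω) s|}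

lemma measurableSet_jEv {Y : ℝ → Ω → ℝ} (hYcad : ∀ ω, CadlagFun fun t => Y t ω)
    (hYm : ∀ t, Measurable fun ω => Y t ω) {c : ℝ} (hc : 0 < c) (u v : ℚ) :
    MeasurableSet (jEv Y c (u:ℝ) (v:ℝ)) := by
  have heq : jEv Y c (u:ℝ) (v:ℝ) = ⋃ j : ℕ, ⋂ m : ℕ, ⋃ (p : ℚ) (q : ℚ)
      (_ : u ≤ p ∧ p < q ∧ q ≤ v ∧ ((q:ℝ) - (p:ℝ) < 1/(m+1))),
      {ω | c + 1/((j:ℝ)+1) ≤ |Y q ω - Y p ω|} := by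
    ext ω
    simp only [jEv, mem_setOf_eq, mem_iUnion, mem_iInter]
    constructor
    · rintro ⟨s, hs, hj⟩
      obtain ⟨j, hj'⟩ := osc_of_jump (hYcad ω) hs hj
      refine ⟨j, fun m => ?_⟩
      obtain ⟨p, q, h1, h2, h3, h4, h5⟩ := hj' m
      exact ⟨p, q, ⟨h1, h2, h3, h4⟩, h5⟩
    · rintro ⟨j, hj⟩
      choose p q hpq hosc using hj
      have hcj : (0:ℝ) < c + 1/((j:ℝ)+1) := by positivity
      obtain ⟨s, hs, hcs⟩ := exists_jump_of_osc (hYcad ω) hcj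
        (fun m => ((p m : ℝ))) (fun m => ((q m : ℝ)))
        (fun m => ⟨Rat.cast_le.mpr (hpq m).1, Rat.cast_lt.mpr (hpq m).2.1,
          Rat.cast_le.mpr (hpq m).2.2.1, (hpq m).2.2.2, hosc m⟩)
      exact ⟨s, hs, lt_of_lt_of_le (lt_add_of_pos_right c (by positivity)) hcs⟩
  rw [heq]
  refine MeasurableSet.iUnion fun j => MeasurableSet.iInter fun m' =>
    MeasurableSet.iUnion fun p => MeasurableSet.iUnion fun q =>
    MeasurableSet.iUnion fun _ => ?_
  exact measurableSet_le measurable_const (((hYm q).sub (hYm p)).abs)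

lemma measurableSet_kEv {Y : ℝ → Ω → ℝ} (hYcad : ∀ ω, CadlagFun fun t => Y t ω)
    (hYm : ∀ t, Measurable fun ω => Y t ω) {c : ℝ} (hc : 0 < c) (k : ℕ) :
    ∀ u v : ℚ, MeasurableSet (kEv Y c k (u:ℝ) (v:ℝ)) := by
  induction k with
  | zero =>
    intro u v
    have : kEv Y c 0 (u:ℝ) (v:ℝ) = univ := by
      ext ω
      simp only [kEv, mem_setOf_eq, mem_univ, iff_true]
      exact ⟨∅, Finset.card_empty, by simp⟩
    rw [this]; exact MeasurableSet.univ
  | succ k ih =>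
    intro u v
    by_cases huv : (u:ℝ) < (v:ℝ)
    · have heq : kEv Y c (k+1) (u:ℝ) (v:ℝ) = ⋃ (q : ℚ) (_ : u ≤ q ∧ q < v),
          (kEv Y c k (u:ℝ) (q:ℝ) ∩ jEv Y c (q:ℝ) (v:ℝ)) := by
        ext ω
        simp only [kEv, jEv, mem_setOf_eq, mem_iUnion, mem_inter_iff]
        constructor
        · rintro ⟨T, hTcard, hT⟩
          have hTne : T.Nonempty := Finset.card_pos.mp (by omega)
          set s₀ := T.max' hTne with hs₀
          have hs₀T : s₀ ∈ T := T.max'_mem hTne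
          set T' := T.erase s₀ with hT'
          have hT'card : T'.card = k := by
            rw [hT', Finset.card_erase_of_mem hs₀T, hTcard]
            omega
          rcases T'.eq_empty_or_nonempty with hT'e | hT'ne
          · -- k = 0 case handled uniformly : take q = u
            have hk0 : k = 0 := by rw [← hT'card, hT'e]; rfl
            refine ⟨u, ⟨le_refl u, by exact_mod_cast huv⟩, ⟨∅, by simp [hk0], by simp⟩,
              s₀, (hT s₀ hs₀T).1, (hT s₀ hs₀T).2⟩
          · set m' := T'.max' hT'ne with hm'
            have hm'T' : m' ∈ T' := T'.max'_mem hT'ne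
            have hm'T : m' ∈ T := Finset.mem_of_mem_erase hm'T'
            have hm's : m' < s₀ := lt_of_le_of_ne (T.le_max' m' hm'T)
              (Finset.ne_of_mem_erase hm'T')
            obtain ⟨q, hq1, hq2⟩ := exists_rat_btwn hm's
            have hqu : u ≤ q := by
              have : (u:ℝ) < q := lt_trans (hT m' hm'T).1.1 hq1
              exact_mod_cast this.le
            have hqv : q < v := by
              have : (q:ℝ) < v := lt_of_lt_of_le hq2 (hT s₀ hs₀T).1.2
              exact_mod_cast this
            refine ⟨q, ⟨hqu, hqv⟩, ⟨T', hT'card, fun s hs => ?_⟩,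
              s₀, ⟨hq2, (hT s₀ hs₀T).1.2⟩, (hT s₀ hs₀T).2⟩
            refine ⟨⟨(hT s (Finset.mem_of_mem_erase hs)).1.1, ?_⟩,
              (hT s (Finset.mem_of_mem_erase hs)).2⟩
            exact le_trans (T'.le_max' s hs) hq1.le
        · rintro ⟨q, ⟨hqu, hqv⟩, ⟨T, hTcard, hT⟩, s, hs, hjs⟩
          have hsT : s ∉ T := by
            intro hmem
            exact absurd ((hT s hmem).1.2.trans_lt hs.1) (lt_irrefl _)
          refine ⟨insert s T, by rw [Finset.card_insert_of_notMem hsT, hTcard], ?_⟩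
          intro t ht
          rcases Finset.mem_insert.mp ht with rfl | htT
          · refine ⟨⟨lt_of_le_of_lt (by exact_mod_cast hqu) hs.1, hs.2⟩, hjs⟩
          · refine ⟨⟨(hT t htT).1.1, (hT t htT).1.2.trans ?_⟩, (hT t htT).2⟩
            exact_mod_cast hqv.le
      rw [heq]
      refine MeasurableSet.iUnion fun q => MeasurableSet.iUnion fun _ => ?_
      exact (ih u q).inter (measurableSet_jEv hYcad hYm hc q v)
    · have : kEv Y c (k+1) (u:ℝ) (v:ℝ) = ∅ := by
        ext ω
        simp only [kEv, mem_setOf_eq, mem_empty_iff_false, iff_false]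
        rintro ⟨T, hTcard, hT⟩
        have hTne : T.Nonempty := Finset.card_pos.mp (by omega)
        obtain ⟨s, hsT⟩ := hTne
        have := (hT s hsT).1
        rw [Ioc_eq_empty huv] at this
        exact this
      rw [this]; exact MeasurableSet.empty

lemma kEv_anti_k {Y : ℝ → Ω → ℝ} {c u v : ℝ} {k k' : ℕ} (h : k ≤ k') :
    kEv Y c k' u v ⊆ kEv Y c k u v := by
  rintro ω ⟨T, hTcard, hT⟩
  obtain ⟨T₂, hT₂sub, hT₂card⟩ := Finset.exists_subset_card_eq (s := T) (n := k) (by omega)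
  exact ⟨T₂, hT₂card, fun s hs => hT s (hT₂sub hs)⟩

lemma kEv_anti_c {Y : ℝ → Ω → ℝ} {c c' u v : ℝ} {k : ℕ} (h : c ≤ c') :
    kEv Y c' k u v ⊆ kEv Y c k u v := by
  rintro ω ⟨T, hTcard, hT⟩
  exact ⟨T, hTcard, fun s hs => ⟨(hT s hs).1, lt_of_le_of_lt h (hT s hs).2⟩⟩

lemma iInter_kEv_empty {Y : ℝ → Ω → ℝ} {c : ℝ} (hc : 0 < c)
    (hYcad : ∀ ω, CadlagFun fun t => Y t ω) :
    (⋂ k : ℕ, kEv Y c k 0 1) = ∅ := by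
  ext ω
  simp only [mem_iInter, mem_empty_iff_false, iff_false, not_forall]
  have hfin := (hYcad ω).finite_jumps hc
  refine ⟨hfin.toFinset.card + 1, ?_⟩
  rintro ⟨T, hTcard, hT⟩
  have hsub : T ⊆ hfin.toFinset := by
    intro s hs
    rw [Set.Finite.mem_toFinset]
    exact ⟨(hT s hs).1, (hT s hs).2⟩
  have := Finset.card_le_card hsub
  omega

end BigJumpAux

open BigJumpAux

/-- **Convergence of the big-jump parts in total variation.** If semimartingales `Xⁿ` with
`Xⁿ_0 = 0` converge uniformly in probability on `[0,1]` to a càdlàg process `Y`, then there is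
`C > 0` such that the total variation over `[0,1]` of the difference of the big-jump parts
`∑_{s ≤ ·} ΔXⁿ_s 1_{|ΔXⁿ_s| > C}` and `∑_{s ≤ ·} ΔY_s 1_{|ΔY_s| > C}` tends to `0` in
probability. -/
theorem bigjump_TV_convergence
    {m : MeasurableSpace Ω} (μ : Measure Ω) [IsProbabilityMeasure μ]
    (X : ℕ → ℝ → Ω → ℝ) (Y : ℝ → Ω → ℝ)
    (hcad : ∀ n, IsCadlag (X n)) (hYcad : IsCadlag Y)
    (hXm : ∀ n t, Measurable fun ω => X n t ω) (hYm : ∀ t, Measurable fun ω => Y t ω)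
    (h0 : ∀ n ω, X n 0 ω = 0)
    (hucp : TendstoUCP μ X Y) :
    ∃ C > (0 : ℝ), TendstoInMeasure μ
      (fun n ω => ∑' s : Ioc (0 : ℝ) 1,
        |(if C < |jump (X n) s ω| then jump (X n) s ω else 0) -
          (if C < |jump Y s ω| then jump Y s ω else 0)|) atTop (fun _ => (0 : ℝ)) := by
  classical
  have hYc : ∀ ω, CadlagFun fun t => Y t ω := fun ω => hYcad ω
  have hXc : ∀ n ω, CadlagFun fun t => X n t ω := fun n ω => hcad n ω
  -- choose a continuity point C of all the jump-counting distribution functions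
  set F : ℕ → ℝ → ℝ≥0∞ := fun k c => μ (kEv Y c k 0 1) with hF
  have hFanti : ∀ k, Antitone (F k) := fun k a b hab => measure_mono (kEv_anti_c hab)
  obtain ⟨C, hC0, hC1, hCcont⟩ : ∃ C : ℝ, 0 < C ∧ C < 1 ∧ ∀ k, ContinuousAt (F k) C := by
    by_contra hcon
    push_neg at hcon
    have hsub : Ioo (0:ℝ) 1 ⊆ ⋃ k : ℕ, {x | ¬ContinuousAt (F k) x} := by
      intro x hx
      obtain ⟨k, hk⟩ := hcon x hx.1 hx.2
      exact mem_iUnion.mpr ⟨k, hk⟩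
    have hcnt : (⋃ k : ℕ, {x | ¬ContinuousAt (F k) x}).Countable :=
      countable_iUnion fun k => (hFanti k).countable_not_continuousAt
    have h1 : volume (Ioo (0:ℝ) 1) ≤ 0 :=
      le_trans (measure_mono hsub) (le_of_eq (hcnt.measure_zero _))
    rw [Real.volume_Ioo] at h1
    simp at h1
  refine ⟨C, hC0, ?_⟩
  rw [tendstoInMeasure_iff_dist]
  intro ε hε
  rw [ENNReal.tendsto_nhds_zero]
  intro θ hθ
  have hθ2 : (0:ℝ≥0∞) < θ/2 := ENNReal.div_pos hθ.ne' ENNReal.ofNat_ne_top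
  have hθ4 : (0:ℝ≥0∞) < θ/2/2 := ENNReal.div_pos hθ2.ne' ENNReal.ofNat_ne_top
  have hmeas01 : ∀ c : ℝ, 0 < c → ∀ k : ℕ, MeasurableSet (kEv Y c k 0 1) := by
    intro c hc k
    have := measurableSet_kEv hYc hYm hc k 0 1
    simpa using this
  -- choice of M
  have hMtend : Tendsto (fun M : ℕ => μ (kEv Y (C/2) M 0 1)) atTop (𝓝 0) := by
    have h0' := iInter_kEv_empty (Y := Y) (half_pos hC0) hYc
    have htd := tendsto_measure_iInter_atTop
      (s := fun M : ℕ => kEv Y (C/2) M 0 1)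
      (fun M => (hmeas01 _ (half_pos hC0) M).nullMeasurableSet)
      (fun a b hab => kEv_anti_k hab)
      ⟨0, measure_ne_top μ _⟩
    rw [h0', measure_empty] at htd
    exact htd
  obtain ⟨M₀, hM₀⟩ := (ENNReal.tendsto_nhds_zero.mp hMtend (θ/2/2) hθ4).exists
  set M := max M₀ 1 with hM
  have hM1 : 1 ≤ M := le_max_right _ _
  have hMle : μ (kEv Y (C/2) M 0 1) ≤ θ/2/2 :=
    le_trans (measure_mono (kEv_anti_k (le_max_left _ _))) hM₀
  have hMpos : (0:ℝ) < (M:ℝ) := by exact_mod_cast Nat.lt_of_lt_of_le Nat.zero_lt_one hM1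
  -- choice of η
  set η₀ : ℝ := min (C/2) (ε / M) with hη₀
  have hη₀pos : 0 < η₀ := lt_min (half_pos hC0) (div_pos hε hMpos)
  set ηi : ℕ → ℝ := fun i => η₀ * (1/((i:ℝ)+1)) with hηi
  have hηipos : ∀ i, 0 < ηi i := fun i => by positivity
  have hηile : ∀ i, ηi i ≤ η₀ := by
    intro i
    rw [hηi]
    have h1 : 1/((i:ℝ)+1) ≤ 1 := by
      rw [div_le_one (by positivity)]
      simp
    nlinarith
  have hseq : Tendsto ηi atTop (𝓝 0) := by
    have h1 := tendsto_one_div_add_atTop_nhds_zero_nat.const_mul η₀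
    rw [mul_zero] at h1
    exact h1.congr (fun i => by rw [hηi])
  have hdifftend : Tendsto (fun i : ℕ => ∑ k ∈ Finset.Icc 1 M,
      μ (kEv Y (C - ηi i) k 0 1 \ kEv Y (C + ηi i) k 0 1)) atTop (𝓝 0) := by
    have hterm : ∀ k ∈ Finset.Icc 1 M, Tendsto (fun i : ℕ =>
        μ (kEv Y (C - ηi i) k 0 1 \ kEv Y (C + ηi i) k 0 1)) atTop (𝓝 0) := by
      intro k _
      have hdiff_eq : ∀ i : ℕ, μ (kEv Y (C - ηi i) k 0 1 \ kEv Y (C + ηi i) k 0 1)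
          = F k (C - ηi i) - F k (C + ηi i) := by
        intro i
        rw [hF]
        rw [measure_diff (kEv_anti_c (by linarith [hηipos i]))
          ((hmeas01 _ (by linarith [hηipos i]) k).nullMeasurableSet) (measure_ne_top μ _)]
      have hCm : Tendsto (fun i : ℕ => C - ηi i) atTop (𝓝 C) := by
        have h1 := (tendsto_const_nhds (α := ℕ) (x := C)).sub hseq
        simpa using h1
      have hCp : Tendsto (fun i : ℕ => C + ηi i) atTop (𝓝 C) := by
        have h1 := (tendsto_const_nhds (α := ℕ) (x := C)).add hseq
        simpa using h1
      have hA : Tendsto (fun i : ℕ => F k (C - ηi i)) atTop (𝓝 (F k C)) :=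
        (hCcont k).tendsto.comp hCm
      have hB : Tendsto (fun i : ℕ => F k (C + ηi i)) atTop (𝓝 (F k C)) :=
        (hCcont k).tendsto.comp hCp
      have hAB := ENNReal.Tendsto.sub hA hB (Or.inl (measure_ne_top μ _))
      rw [tsub_self] at hAB
      exact Tendsto.congr (fun i => (hdiff_eq i).symm) hAB
    have hsum := tendsto_finset_sum (Finset.Icc 1 M) hterm
    simpa using hsum
  obtain ⟨i, hi⟩ := (ENNReal.tendsto_nhds_zero.mp hdifftend (θ/2/2) hθ4).exists
  set η : ℝ := ηi i with hη
  have hηpos : 0 < η := hηipos i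
  have hηC : η ≤ C/2 := le_trans (hηile i) (min_le_left _ _)
  have hηε : η ≤ ε / M := le_trans (hηile i) (min_le_right _ _)
  -- the exceptional events not depending on n
  set G2 : Set Ω := ⋃ k ∈ Finset.Icc 1 M, (kEv Y (C - η) k 0 1 \ kEv Y (C + η) k 0 1) with hG2
  set G3 : Set Ω := kEv Y (C/2) M 0 1 with hG3
  have hG2le : μ G2 ≤ θ/2/2 := le_trans (measure_biUnion_finset_le _ _) hi
  -- use the ucp assumption
  have hSev := ENNReal.tendsto_nhds_zero.mp (hucp (η/2) (by positivity)) (θ/2) hθ2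
  filter_upwards [hSev] with n hn
  set G1 : Set Ω := {ω | η/2 ≤ runSup (fun t ω' => X n t ω' - Y t ω') ω} with hG1
  have hsub : {x | ε ≤ dist (∑' s : Ioc (0 : ℝ) 1,
      |(if C < |jump (X n) s x| then jump (X n) s x else 0) -
        (if C < |jump Y s x| then jump Y s x else 0)|) ((fun _ => (0:ℝ)) x)}
      ⊆ G1 ∪ (G2 ∪ G3) := by
    intro ω hω
    rw [mem_union, mem_union]
    by_contra hcon
    push_neg at hcon
    obtain ⟨hw1, hw2, hw3⟩ := hcon
    -- pathwise notation
    have hjf : ∀ t : ℝ, jump (X n) t ω = jumpF (fun u => X n u ω) t := fun t => rfl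
    have hjg : ∀ t : ℝ, jump Y t ω = jumpF (fun u => Y u ω) t := fun t => rfl
    have hdc : CadlagFun (fun t => X n t ω - Y t ω) := (hXc n ω).sub (hYc ω)
    obtain ⟨B, hB⟩ := hdc.exists_bound
    set S := runSup (fun t ω' => X n t ω' - Y t ω') ω with hSdef
    have hbdd : BddAbove ((fun t => |X n t ω - Y t ω|) '' Icc (0:ℝ) 1) := by
      refine ⟨B, ?_⟩
      rintro y ⟨t, ht, rfl⟩
      exact hB t ht
    have hle : ∀ t ∈ Icc (0:ℝ) 1, |X n t ω - Y t ω| ≤ S := fun t ht =>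
      le_csSup hbdd ⟨t, ht, rfl⟩
    have hS0 : 0 ≤ S := le_trans (abs_nonneg (X n 0 ω - Y 0 ω)) (hle 0 ⟨le_refl 0, zero_le_one⟩)
    have hSlt : S < η/2 := not_le.mp hw1
    have hjumpd : ∀ s ∈ Ioc (0:ℝ) 1,
        |jumpF (fun u => X n u ω) s - jumpF (fun u => Y u ω) s| ≤ 2*S := by
      intro s hs
      rw [← jumpF_sub (hXc n ω) (hYc ω)]
      have hd1 : |X n s ω - Y s ω| ≤ S := hle s ⟨hs.1.le, hs.2⟩
      have hd2 : |Function.leftLim (fun t => X n t ω - Y t ω) s| ≤ S :=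
        hdc.abs_leftLim_le hs hle
      calc |jumpF (fun t => X n t ω - Y t ω) s|
          ≤ |X n s ω - Y s ω| + |Function.leftLim (fun t => X n t ω - Y t ω) s| :=
            abs_sub _ _
        _ ≤ 2*S := by linarith
    -- no band jumps
    have hNoBand : ∀ s ∈ Ioc (0:ℝ) 1, C - η < |jumpF (fun u => Y u ω) s| →
        C + η < |jumpF (fun u => Y u ω) s| := by
      intro s hs hlow
      by_contra hhigh
      push_neg at hhigh
      have hfin := (hYc ω).finite_jumps (c := C + η) (by linarith)
      set T := hfin.toFinset with hT
      have hsT : s ∉ T := by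
        rw [hT, Set.Finite.mem_toFinset]
        rintro ⟨-, hc'⟩
        linarith
      have hTmem : ∀ t ∈ T, t ∈ Ioc (0:ℝ) 1 ∧ C + η < |jumpF (fun u => Y u ω) t| := by
        intro t ht
        rw [hT, Set.Finite.mem_toFinset] at ht
        exact ht
      set k := T.card + 1 with hk
      have hcardins : (insert s T).card = k := by
        rw [Finset.card_insert_of_notMem hsT]
      have hTprop : ∀ t ∈ insert s T, t ∈ Ioc (0:ℝ) 1 ∧ C - η < |jumpF (fun u => Y u ω) t| := by
        intro t ht
        rcases Finset.mem_insert.mp ht with rfl | htT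
        · exact ⟨hs, hlow⟩
        · exact ⟨(hTmem t htT).1, by linarith [(hTmem t htT).2]⟩
      have hkM : k ≤ M := by
        by_contra hkM'
        push_neg at hkM'
        apply hw3
        obtain ⟨T₂, hT₂sub, hT₂card⟩ := Finset.exists_subset_card_eq (s := insert s T) (n := M)
          (by omega)
        refine ⟨T₂, hT₂card, fun t ht => ?_⟩
        have h6 := hTprop t (hT₂sub ht)
        exact ⟨h6.1, by linarith [h6.2]⟩
      apply hw2
      rw [hG2]
      refine mem_biUnion (Finset.mem_Icc.mpr ⟨by omega, hkM⟩) ⟨⟨insert s T, hcardins, hTprop⟩, ?_⟩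
      rintro ⟨T₄, hT₄card, hT₄⟩
      have hsub4 : T₄ ⊆ T := by
        intro t ht
        rw [hT, Set.Finite.mem_toFinset]
        exact ⟨(hT₄ t ht).1, (hT₄ t ht).2⟩
      have := Finset.card_le_card hsub4
      omega
    -- bound the total variation sum
    have hterm : ∀ s : ↥(Ioc (0:ℝ) 1),
        |(if C < |jump (X n) (s:ℝ) ω| then jump (X n) (s:ℝ) ω else 0) -
          (if C < |jump Y (s:ℝ) ω| then jump Y (s:ℝ) ω else 0)| ≤ 2*S ∧
        (C + η < |jumpF (fun u => Y u ω) (s:ℝ)| ∨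
          |(if C < |jump (X n) (s:ℝ) ω| then jump (X n) (s:ℝ) ω else 0) -
          (if C < |jump Y (s:ℝ) ω| then jump Y (s:ℝ) ω else 0)| = 0) := by
      intro s
      have hd := hjumpd (s:ℝ) s.2
      simp only [hjf, hjg]
      rcases le_or_gt (|jumpF (fun u => Y u ω) (s:ℝ)|) (C - η) with hlo | hhi
      · have hfx : ¬ C < |jumpF (fun u => X n u ω) (s:ℝ)| := by
          push_neg
          have h7 := abs_sub_abs_le_abs_sub (jumpF (fun u => X n u ω) (s:ℝ))
            (jumpF (fun u => Y u ω) (s:ℝ))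
          linarith
        have hgx : ¬ C < |jumpF (fun u => Y u ω) (s:ℝ)| := by
          push_neg
          linarith
        rw [if_neg hfx, if_neg hgx]
        simp [hS0]
      · have hband := hNoBand (s:ℝ) s.2 hhi
        have hfx : C < |jumpF (fun u => X n u ω) (s:ℝ)| := by
          have h7 := abs_sub_abs_le_abs_sub (jumpF (fun u => Y u ω) (s:ℝ))
            (jumpF (fun u => X n u ω) (s:ℝ))
          rw [abs_sub_comm] at h7
          linarith
        have hgx : C < |jumpF (fun u => Y u ω) (s:ℝ)| := by linarith
        rw [if_pos hfx, if_pos hgx]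
        exact ⟨hd, Or.inl hband⟩
    have hεgt : dist (∑' s : Ioc (0 : ℝ) 1,
        |(if C < |jump (X n) s ω| then jump (X n) s ω else 0) -
          (if C < |jump Y s ω| then jump Y s ω else 0)|) ((fun _ => (0:ℝ)) ω) < ε := by
      rw [Real.dist_0_eq_abs, abs_of_nonneg (tsum_nonneg (fun s => abs_nonneg _))]
      have hfin := (hYc ω).finite_jumps (c := C + η) (by linarith)
      set Fs : Finset ↥(Ioc (0:ℝ) 1) := hfin.toFinset.subtype _ with hFs
      have hzero : ∀ s ∉ Fs, |(if C < |jump (X n) (s:ℝ) ω| then jump (X n) (s:ℝ) ω else 0) -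
          (if C < |jump Y (s:ℝ) ω| then jump Y (s:ℝ) ω else 0)| = 0 := by
        intro s hsF
        rcases (hterm s).2 with hgt | hz
        · exfalso
          apply hsF
          rw [hFs, Finset.mem_subtype, Set.Finite.mem_toFinset]
          exact ⟨s.2, hgt⟩
        · exact hz
      rw [tsum_eq_sum hzero]
      have hcard : Fs.card ≤ M := by
        have h5 : Fs.card ≤ hfin.toFinset.card := by
          rw [hFs, Finset.card_subtype]
          exact Finset.card_filter_le _ _
        have h6 : hfin.toFinset.card ≤ M := by
          by_contra h7
          push_neg at h7
          apply hw3
          obtain ⟨T₂, hT₂sub, hT₂card⟩ := Finset.exists_subset_card_eq (s := hfin.toFinset) (n := M) (le_of_lt h7)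
          refine ⟨T₂, hT₂card, fun t ht => ?_⟩
          have h8 := hT₂sub ht
          rw [Set.Finite.mem_toFinset] at h8
          simp only [mem_setOf_eq] at h8
          exact ⟨h8.1, by linarith [h8.2]⟩
        omega
      calc ∑ s ∈ Fs, |(if C < |jump (X n) (s:ℝ) ω| then jump (X n) (s:ℝ) ω else 0) -
          (if C < |jump Y (s:ℝ) ω| then jump Y (s:ℝ) ω else 0)|
          ≤ Fs.card • (2*S) := Finset.sum_le_card_nsmul _ _ _ (fun s _ => (hterm s).1)
        _ = (Fs.card : ℝ) * (2*S) := nsmul_eq_mul _ _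
        _ ≤ (M:ℝ) * (2*S) := by
            apply mul_le_mul_of_nonneg_right _ (by linarith)
            exact_mod_cast hcard
        _ < (M:ℝ) * η := by
            apply mul_lt_mul_of_pos_left (by linarith) hMpos
        _ ≤ (M:ℝ) * (ε / M) := mul_le_mul_of_nonneg_left hηε (by linarith)
        _ = ε := by field_simp
    exact absurd hω (not_le.mpr hεgt)
  calc μ _ ≤ μ (G1 ∪ (G2 ∪ G3)) := measure_mono hsub
    _ ≤ μ G1 + (μ G2 + μ G3) :=
        le_trans (measure_union_le _ _) (by gcongr; exact measure_union_le _ _)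
    _ ≤ θ/2 + (θ/2/2 + θ/2/2) := add_le_add hn (add_le_add hG2le hMle)
    _ = θ := by rw [ENNReal.add_halves, ENNReal.add_halves]
end
end
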